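/- For every positive integer n, DE1(n) + DE1(n−1) equals the number of 4-regular partitions of n, i.e. the number of partitions of n into parts none of which is divisible by 4. -/

import Mathlib

/-- `DE1 n` is the number of partitions of `n` in which no even part is repeated
and the largest part is odd. -/
noncomputable def DE1 (n : ℕ) : ℕ :=
  Nat.card {p : n.Partition //
    (∀ k ∈ p.parts, Even k → p.parts.count k = 1) ∧
    ∃ k ∈ p.parts, Odd k ∧ ∀ j ∈ p.parts, j ≤ k}

/-- `DE2 n` is the number of partitions of `n` in which no even part is repeated,
the largest part is odd and appears at least twice. -/
noncomputable def DE2 (n : ℕ) : ℕ :=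
  Nat.card {p : n.Partition //
    (∀ k ∈ p.parts, Even k → p.parts.count k = 1) ∧
    ∃ k ∈ p.parts, Odd k ∧ 2 ≤ p.parts.count k ∧ ∀ j ∈ p.parts, j ≤ k}

/-- `DE3 n` is the number of partitions of `n` in which no even part is repeated,
the largest part is odd and appears exactly once. -/
noncomputable def DE3 (n : ℕ) : ℕ :=
  Nat.card {p : n.Partition //
    (∀ k ∈ p.parts, Even k → p.parts.count k = 1) ∧
    ∃ k ∈ p.parts, Odd k ∧ p.parts.count k = 1 ∧ ∀ j ∈ p.parts, j ≤ k}

open Multiset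

namespace StmtAux

/-- The Glaisher-type block: an even part `e = 2^(a+1)*m` (`m` odd) is replaced by
`2^a` copies of `2*m`. -/
def blk (e : ℕ) : Multiset ℕ := Multiset.replicate (e / (2 * ordCompl[2] e)) (2 * ordCompl[2] e)

def phi (s : Multiset ℕ) : Multiset ℕ := s.bind blk

noncomputable def psi (s : Multiset ℕ) : Multiset ℕ :=
  s.toFinset.val.bind fun k => (((s.count k).bitIndices.map fun i => 2 ^ i * k : List ℕ) : Multiset ℕ)

lemma odd_pos' {m : ℕ} (hm : Odd m) : 0 < m := by
  rcases Nat.eq_zero_or_pos m with h | h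
  · subst h; simp at hm
  · exact h

lemma fac2 (a m : ℕ) (hm : Odd m) : (2 ^ (a+1) * m).factorization 2 = a + 1 := by
  have hm0 : m ≠ 0 := (odd_pos' hm).ne'
  rw [Nat.factorization_mul (by positivity) hm0]
  have h2 : ¬ 2 ∣ m := by
    simp [Nat.two_dvd_ne_zero, Nat.odd_iff.mp hm]
  simp [Nat.Prime.factorization_pow, Nat.prime_two, Nat.factorization_eq_zero_of_not_dvd h2]

lemma oc (a m : ℕ) (hm : Odd m) : ordCompl[2] (2 ^ (a+1) * m) = m := by
  rw [fac2 a m hm, Nat.mul_div_cancel_left _ (by positivity)]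

lemma param_inj {a b m m' : ℕ} (hm : Odd m) (hm' : Odd m')
    (h : 2 ^ (a+1) * m = 2 ^ (b+1) * m') : a = b ∧ m = m' := by
  have h1 := fac2 a m hm
  have h2 := fac2 b m' hm'
  rw [h] at h1
  have hab : a = b := by omega
  subst hab
  refine ⟨rfl, ?_⟩
  have := Nat.eq_of_mul_eq_mul_left (show 0 < 2 ^ (a+1) by positivity) h
  exact this

lemma decomp {e : ℕ} (he : Even e) (h0 : e ≠ 0) :
    ∃ a m, Odd m ∧ e = 2 ^ (a+1) * m ∧ ordCompl[2] e = m ∧ e.factorization 2 = a + 1 := by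
  have hv : 0 < e.factorization 2 :=
    Nat.Prime.factorization_pos_of_dvd Nat.prime_two h0 he.two_dvd
  refine ⟨e.factorization 2 - 1, ordCompl[2] e, ?_, ?_, rfl, by omega⟩
  · rw [Nat.odd_iff, ← Nat.two_dvd_ne_zero]
    simpa using Nat.not_dvd_ordCompl Nat.prime_two h0
  · rw [show e.factorization 2 - 1 + 1 = e.factorization 2 by omega]
    exact (Nat.ordProj_mul_ordCompl_eq_self e 2).symm

lemma blk_eq (a m : ℕ) (hm : Odd m) :
    blk (2 ^ (a+1) * m) = replicate (2 ^ a) (2 * m) := by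
  have hm0 : 0 < m := odd_pos' hm
  rw [blk, oc a m hm]
  congr 1
  have : 2 ^ (a+1) * m = (2 * m) * 2 ^ a := by ring
  rw [this, Nat.mul_div_cancel_left _ (by positivity)]

lemma blk_sum {e : ℕ} (he : Even e) (h0 : e ≠ 0) : (blk e).sum = e := by
  obtain ⟨a, m, hm, rfl, -, -⟩ := decomp he h0
  rw [blk_eq a m hm, Multiset.sum_replicate, smul_eq_mul]
  ring

lemma phi_sum {s : Multiset ℕ} (h : ∀ e ∈ s, Even e ∧ e ≠ 0) : (phi s).sum = s.sum := by
  induction s using Multiset.induction_on with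
  | empty => simp [phi]
  | cons a s ih =>
      rw [phi, Multiset.cons_bind, Multiset.sum_add, ← phi,
        ih (fun e he => h e (mem_cons_of_mem he)), Multiset.sum_cons,
        blk_sum (h a (mem_cons_self a s)).1 (h a (mem_cons_self a s)).2]

lemma phi_mem {s : Multiset ℕ} (h : ∀ e ∈ s, Even e ∧ e ≠ 0) {x : ℕ} (hx : x ∈ phi s) :
    ∃ m, Odd m ∧ 0 < m ∧ x = 2 * m := by
  rw [phi, Multiset.mem_bind] at hx
  obtain ⟨e, he, hxe⟩ := hx
  obtain ⟨a, m, hm, rfl, -, -⟩ := decomp (h e he).1 (h e he).2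
  rw [blk_eq a m hm] at hxe
  rw [Multiset.eq_of_mem_replicate hxe]
  exact ⟨m, hm, odd_pos' hm, rfl⟩

lemma sum_map_ite {s : Multiset ℕ} (P : ℕ → Prop) [DecidablePred P] (f : ℕ → ℕ) :
    (s.map fun e => if P e then f e else 0).sum = ((s.filter P).map f).sum := by
  induction s using Multiset.induction_on with
  | empty => simp
  | cons a s ih =>
      by_cases h : P a <;> simp [Multiset.filter_cons, h, ih]


lemma count_phi {s : Multiset ℕ} (hs : s.Nodup) (h : ∀ e ∈ s, Even e ∧ e ≠ 0)
    {m : ℕ} (hm : Odd m) (a : ℕ) :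
    a ∈ ((phi s).count (2*m)).bitIndices ↔ 2 ^ (a+1) * m ∈ s := by
  classical
  set T : Multiset ℕ := s.filter (fun e => ordCompl[2] e = m) with hT
  set A : Multiset ℕ := T.map (fun e => e.factorization 2 - 1) with hA
  -- step 1 : count formula
  have hcount : (phi s).count (2*m) = (A.map (fun i => 2 ^ i)).sum := by
    rw [phi, Multiset.count_bind]
    have hptw : (s.map fun e => Multiset.count (2*m) (blk e)) =
        s.map fun e => if ordCompl[2] e = m then 2 ^ (e.factorization 2 - 1) else 0 := by
      apply Multiset.map_congr rfl
      intro e he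
      obtain ⟨b, m', hm', he', hoc', hfac'⟩ := decomp (h e he).1 (h e he).2
      rw [he', blk_eq b m' hm', Multiset.count_replicate, oc b m' hm', fac2 b m' hm']
      simp only [Nat.add_sub_cancel]
      split_ifs <;> omega
    rw [hptw, sum_map_ite (fun e => ordCompl[2] e = m) (fun e => 2 ^ (e.factorization 2 - 1)),
      ← hT, hA, Multiset.map_map]
    rfl
  -- step 2 : A is nodup
  have hTprop : ∀ e ∈ T, e ∈ s ∧ ordCompl[2] e = m := by
    intro e he
    rw [hT, Multiset.mem_filter] at he
    exact he
  have hTeq : ∀ e ∈ T, e = 2 ^ (e.factorization 2 - 1 + 1) * m := by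
    intro e he
    obtain ⟨hes, hoc'⟩ := hTprop e he
    obtain ⟨b, m', hm', he', hoc2, hfac'⟩ := decomp (h e hes).1 (h e hes).2
    have hmm : m' = m := by rw [← hoc2, hoc']
    rw [hfac']
    simp only [Nat.add_sub_cancel]
    rw [he', hmm]
  have hAnd : A.Nodup := by
    rw [hA]
    refine Multiset.Nodup.map_on ?_ (hs.filter _)
    intro e he e' he' hee
    rw [hTeq e he, hTeq e' he', hee]
  -- step 3 : the sorted list of A
  set L : List ℕ := A.sort (· ≤ ·) with hL
  have hLA : (L : Multiset ℕ) = A := Multiset.sort_eq _ _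
  have hLnd : L.Nodup := by rw [← Multiset.coe_nodup, hLA]; exact hAnd
  have hLsort : L.Pairwise (· < ·) :=
    ((Multiset.pairwise_sort _ _).and hLnd).imp fun h => lt_of_le_of_ne h.1 h.2
  have hbit : ((phi s).count (2*m)).bitIndices = L := by
    rw [hcount, ← hLA]
    rw [show ((L : Multiset ℕ).map fun i => 2 ^ i) = ((L.map fun i => 2 ^ i : List ℕ) : Multiset ℕ) from rfl]
    rw [Multiset.sum_coe]
    exact Nat.bitIndices_twoPowsum hLsort.sortedLT
  rw [hbit]
  have hmemA : a ∈ L ↔ a ∈ A := by rw [← hLA]; rfl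
  rw [show (a ∈ L) = (a ∈ (L : Multiset ℕ)) from rfl, hLA]
  -- step 4 : membership in A iff membership in s
  constructor
  · intro ha
    rw [hA, Multiset.mem_map] at ha
    obtain ⟨e, he, hea⟩ := ha
    have := hTeq e he
    rw [hea] at this
    rw [← this]
    exact (hTprop e he).1
  · intro hx
    rw [hA, Multiset.mem_map]
    refine ⟨2 ^ (a+1) * m, ?_, ?_⟩
    · rw [hT, Multiset.mem_filter]
      exact ⟨hx, oc a m hm⟩
    · rw [fac2 a m hm]
      simp


lemma mem_psi {F : Multiset ℕ} {x : ℕ} :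
    x ∈ psi F ↔ ∃ k ∈ F, ∃ i ∈ (F.count k).bitIndices, x = 2 ^ i * k := by
  rw [psi, Multiset.mem_bind]
  constructor
  · rintro ⟨k, hk, hx⟩
    rw [Multiset.mem_coe, List.mem_map] at hx
    obtain ⟨i, hi, rfl⟩ := hx
    exact ⟨k, by simpa using hk, i, hi, rfl⟩
  · rintro ⟨k, hk, i, hi, rfl⟩
    exact ⟨k, by simpa using hk, by rw [Multiset.mem_coe, List.mem_map]; exact ⟨i, hi, rfl⟩⟩

lemma psi_mem_form {F : Multiset ℕ} (hF : ∀ k ∈ F, ∃ m, Odd m ∧ 0 < m ∧ k = 2*m)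
    {x : ℕ} (hx : x ∈ psi F) : Even x ∧ x ≠ 0 := by
  rw [mem_psi] at hx
  obtain ⟨k, hk, i, hi, rfl⟩ := hx
  obtain ⟨m, hm, hm0, rfl⟩ := hF k hk
  constructor
  · exact ⟨2 ^ i * m, by ring⟩
  · positivity

lemma psi_nodup {F : Multiset ℕ} (hF : ∀ k ∈ F, ∃ m, Odd m ∧ 0 < m ∧ k = 2*m) :
    (psi F).Nodup := by
  rw [psi, Multiset.nodup_bind]
  constructor
  · intro k hk
    rw [Multiset.coe_nodup]
    refine List.Nodup.map ?_ (Nat.bitIndices_sorted.nodup)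
    intro i j hij
    obtain ⟨m, hm, hm0, rfl⟩ := hF k (by simpa using hk)
    exact Nat.pow_right_injective (le_refl 2) (Nat.eq_of_mul_eq_mul_right (by positivity) hij)
  · refine Multiset.Nodup.pairwise ?_ F.toFinset.nodup
    intro k hk k' hk' hne
    simp only [Function.onFun]
    rw [Multiset.disjoint_left]
    intro x hx hx'
    rw [Multiset.mem_coe, List.mem_map] at hx hx'
    obtain ⟨i, hi, rfl⟩ := hx
    obtain ⟨j, hj, hij⟩ := hx'
    obtain ⟨m, hm, hm0, rfl⟩ := hF k (by simpa using hk)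
    obtain ⟨m', hm', hm0', rfl⟩ := hF k' (by simpa using hk')
    have h1 : 2 ^ (j+1) * m' = 2 ^ (i+1) * m := by
      calc 2 ^ (j+1) * m' = 2 ^ j * (2*m') := by ring
        _ = 2 ^ i * (2*m) := hij
        _ = 2 ^ (i+1) * m := by ring
    obtain ⟨-, h3⟩ := param_inj hm' hm h1
    exact hne (by rw [h3])

lemma bind_count (F : Multiset ℕ) :
    F.toFinset.val.bind (fun k => replicate (F.count k) k) = F := by
  classical
  conv_rhs => rw [← Multiset.toFinset_sum_count_nsmul_eq F]
  rw [Finset.sum, Multiset.bind, Multiset.join]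
  congr 1
  apply Multiset.map_congr rfl
  intro k _
  rw [Multiset.nsmul_singleton]

lemma phi_cons (a : ℕ) (s : Multiset ℕ) : phi (a ::ₘ s) = blk a + phi s := by
  rw [phi, Multiset.cons_bind, phi]

lemma phi_list (m : ℕ) (hm : Odd m) (L : List ℕ) :
    phi ((L.map fun i => 2 ^ i * (2*m) : List ℕ) : Multiset ℕ)
      = replicate ((L.map fun i => 2 ^ i).sum) (2*m) := by
  induction L with
  | nil => simp [phi]
  | cons i L ih =>
      rw [List.map_cons, ← Multiset.cons_coe, phi_cons, ih,
        show 2 ^ i * (2*m) = 2 ^ (i+1) * m by ring, blk_eq i m hm,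
        List.map_cons, List.sum_cons, Multiset.replicate_add]

lemma phi_of_psi {F : Multiset ℕ} (hF : ∀ k ∈ F, ∃ m, Odd m ∧ 0 < m ∧ k = 2*m) :
    phi (psi F) = F := by
  rw [psi, phi, Multiset.bind_assoc]
  rw [Multiset.bind_congr (g := fun k => replicate (F.count k) k) ?_]
  · exact bind_count F
  · intro k hk
    obtain ⟨m, hm, hm0, rfl⟩ := hF k (by simpa using hk)
    rw [← phi, phi_list m hm, Nat.twoPowSum_bitIndices]

lemma psi_of_phi {s : Multiset ℕ} (hs : s.Nodup) (h : ∀ e ∈ s, Even e ∧ e ≠ 0) :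
    psi (phi s) = s := by
  classical
  have hphiF : ∀ k ∈ phi s, ∃ m, Odd m ∧ 0 < m ∧ k = 2*m := fun k hk => phi_mem h hk
  rw [Multiset.Nodup.ext (psi_nodup hphiF) hs]
  intro x
  constructor
  · intro hx
    rw [mem_psi] at hx
    obtain ⟨k, hk, i, hi, rfl⟩ := hx
    obtain ⟨m, hm, hm0, rfl⟩ := hphiF k hk
    have := (count_phi hs h hm i).mp hi
    rw [show 2 ^ i * (2*m) = 2 ^ (i+1) * m by ring]
    exact this
  · intro hx
    obtain ⟨a, m, hm, hxe, -, -⟩ := decomp (h x hx).1 (h x hx).2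
    subst hxe
    have ha : a ∈ ((phi s).count (2*m)).bitIndices := (count_phi hs h hm a).mpr hx
    have hcpos : 0 < (phi s).count (2*m) := by
      rcases Nat.eq_zero_or_pos ((phi s).count (2*m)) with h0 | h0
      · rw [h0] at ha; simp at ha
      · exact h0
    rw [mem_psi]
    exact ⟨2*m, Multiset.count_pos.mp hcpos, a, ha, by ring⟩

lemma psi_sum {F : Multiset ℕ} (hF : ∀ k ∈ F, ∃ m, Odd m ∧ 0 < m ∧ k = 2*m) :
    (psi F).sum = F.sum := by
  conv_rhs => rw [← phi_of_psi hF]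
  rw [phi_sum (fun e he => psi_mem_form hF he)]


/-! ### Partition level -/

variable {n : ℕ}

open Nat

def PA (p : n.Partition) : Prop := ∀ k ∈ p.parts, Even k → p.parts.count k = 1

def PB (p : n.Partition) : Prop := ∀ k ∈ p.parts, ¬ (4 ∣ k)

noncomputable def oddP (p : n.Partition) : Multiset ℕ := p.parts.filter (fun k => Odd k)
noncomputable def evenP (p : n.Partition) : Multiset ℕ := p.parts.filter (fun k => ¬ Odd k)

lemma oddP_add_evenP (p : n.Partition) : oddP p + evenP p = p.parts :=
  Multiset.filter_add_not _ _

lemma oddP_prop (p : n.Partition) : ∀ k ∈ oddP p, Odd k := by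
  intro k hk; exact (Multiset.mem_filter.mp hk).2

lemma oddP_mem (p : n.Partition) : ∀ k ∈ oddP p, k ∈ p.parts := by
  intro k hk; exact (Multiset.mem_filter.mp hk).1

lemma evenP_prop (p : n.Partition) : ∀ e ∈ evenP p, Even e ∧ e ≠ 0 := by
  intro e he
  obtain ⟨hes, hno⟩ := Multiset.mem_filter.mp he
  exact ⟨Nat.not_odd_iff_even.mp hno, (p.parts_pos hes).ne'⟩

lemma evenP_nodup {p : n.Partition} (hp : PA p) : (evenP p).Nodup := by
  rw [Multiset.nodup_iff_count_le_one]
  intro k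
  by_cases hk : k ∈ evenP p
  · obtain ⟨hks, hno⟩ := Multiset.mem_filter.mp hk
    have h1 := hp k hks (Nat.not_odd_iff_even.mp hno)
    calc (evenP p).count k ≤ p.parts.count k :=
          Multiset.count_le_of_le k (Multiset.filter_le _ _)
      _ ≤ 1 := le_of_eq h1
  · rw [Multiset.count_eq_zero_of_notMem hk]; omega

lemma evenP_form {p : n.Partition} (hp : PB p) :
    ∀ k ∈ evenP p, ∃ m, Odd m ∧ 0 < m ∧ k = 2 * m := by
  intro k hk
  obtain ⟨hke, hk0⟩ := evenP_prop p k hk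
  obtain ⟨a, m, hm, hkeq, -, -⟩ := decomp hke hk0
  have ha : a = 0 := by
    by_contra hane
    apply hp k (Multiset.mem_of_le (Multiset.filter_le _ _) hk)
    rw [hkeq]
    have : (4 : ℕ) ∣ 2 ^ (a+1) := by
      have : 2 ≤ a + 1 := by omega
      calc (4:ℕ) = 2 ^ 2 := by norm_num
        _ ∣ 2 ^ (a+1) := pow_dvd_pow 2 this
    exact this.mul_right m
  subst ha
  exact ⟨m, hm, odd_pos' hm, by rw [hkeq]; ring⟩

/-- Forward map on partitions : distinct-even to 4-regular. -/
noncomputable def toB (p : n.Partition) : n.Partition where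
  parts := oddP p + phi (evenP p)
  parts_pos := by
    intro i hi
    rcases Multiset.mem_add.mp hi with h | h
    · exact p.parts_pos (oddP_mem p i h)
    · obtain ⟨m, hm, hm0, rfl⟩ := phi_mem (evenP_prop p) h
      omega
  parts_sum := by
    rw [Multiset.sum_add, phi_sum (evenP_prop p), ← Multiset.sum_add,
      oddP_add_evenP, p.parts_sum]

/-- Backward map on partitions : 4-regular to distinct-even. -/
noncomputable def toA (p : n.Partition) (hp : PB p) : n.Partition where
  parts := oddP p + psi (evenP p)
  parts_pos := by
    intro i hi
    rcases Multiset.mem_add.mp hi with h | h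
    · exact p.parts_pos (oddP_mem p i h)
    · have := psi_mem_form (evenP_form hp) h
      omega
  parts_sum := by
    rw [Multiset.sum_add, psi_sum (evenP_form hp), ← Multiset.sum_add,
      oddP_add_evenP, p.parts_sum]

lemma oddP_toB (p : n.Partition) : oddP (toB p) = oddP p := by
  rw [oddP, toB, Multiset.filter_add]
  rw [show (phi (evenP p)).filter (fun k => Odd k) = 0 from ?_, add_zero]
  · rw [Multiset.filter_eq_self.mpr (oddP_prop p)]
  · rw [Multiset.filter_eq_nil]
    intro k hk
    obtain ⟨m, hm, hm0, rfl⟩ := phi_mem (evenP_prop p) hk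
    simp [Nat.not_odd_iff_even]

lemma evenP_toB (p : n.Partition) : evenP (toB p) = phi (evenP p) := by
  rw [evenP, toB, Multiset.filter_add]
  rw [show (oddP p).filter (fun k => ¬ Odd k) = 0 from ?_, zero_add]
  · rw [Multiset.filter_eq_self]
    intro k hk
    obtain ⟨m, hm, hm0, rfl⟩ := phi_mem (evenP_prop p) hk
    simp [Nat.not_odd_iff_even]
  · rw [Multiset.filter_eq_nil]
    intro k hk
    simpa using oddP_prop p k hk

lemma oddP_toA (p : n.Partition) (hp : PB p) : oddP (toA p hp) = oddP p := by
  rw [oddP, toA, Multiset.filter_add]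
  rw [show (psi (evenP p)).filter (fun k => Odd k) = 0 from ?_, add_zero]
  · rw [Multiset.filter_eq_self.mpr (oddP_prop p)]
  · rw [Multiset.filter_eq_nil]
    intro k hk
    have := (psi_mem_form (evenP_form hp) hk).1
    simpa [Nat.not_odd_iff_even] using this

lemma evenP_toA (p : n.Partition) (hp : PB p) : evenP (toA p hp) = psi (evenP p) := by
  rw [evenP, toA, Multiset.filter_add]
  rw [show (oddP p).filter (fun k => ¬ Odd k) = 0 from ?_, zero_add]
  · rw [Multiset.filter_eq_self]
    intro k hk
    have := (psi_mem_form (evenP_form hp) hk).1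
    simpa [Nat.not_odd_iff_even] using this
  · rw [Multiset.filter_eq_nil]
    intro k hk
    simpa using oddP_prop p k hk

lemma toB_PB (p : n.Partition) : PB (toB p) := by
  intro k hk h4
  rcases Multiset.mem_add.mp hk with h | h
  · have hodd := oddP_prop p k h
    have : (2:ℕ) ∣ k := dvd_trans (by norm_num) h4
    rw [Nat.odd_iff] at hodd
    omega
  · obtain ⟨m, hm, hm0, rfl⟩ := phi_mem (evenP_prop p) h
    have : (2:ℕ) ∣ m := by omega
    rw [Nat.odd_iff] at hm
    omega

lemma toA_PA (p : n.Partition) (hp : PB p) : PA (toA p hp) := by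
  intro k hk hke
  have hoddzero : (oddP p).count k = 0 := by
    rw [Multiset.count_eq_zero]
    intro hmem
    have := oddP_prop p k hmem
    rw [Nat.odd_iff] at this
    obtain ⟨r, hr⟩ := hke
    omega
  have hc : (toA p hp).parts.count k = (psi (evenP p)).count k := by
    show ((oddP p) + psi (evenP p)).count k = _
    rw [Multiset.count_add, hoddzero, zero_add]
  rw [hc]
  have hnd := psi_nodup (evenP_form hp)
  have hle := Multiset.nodup_iff_count_le_one.mp hnd k
  have hmem : k ∈ psi (evenP p) := by
    rcases Multiset.mem_add.mp hk with h | h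
    · exfalso
      have := oddP_prop p k h
      rw [Nat.odd_iff] at this
      obtain ⟨r, hr⟩ := hke
      omega
    · exact h
  have := Multiset.count_pos.mpr hmem
  omega

lemma toA_toB {p : n.Partition} (hp : PA p) : toA (toB p) (toB_PB p) = p := by
  ext1
  show oddP (toB p) + psi (evenP (toB p)) = p.parts
  rw [oddP_toB, evenP_toB, psi_of_phi (evenP_nodup hp) (evenP_prop p), oddP_add_evenP]

lemma toB_toA {p : n.Partition} (hp : PB p) : toB (toA p hp) = p := by
  ext1
  show oddP (toA p hp) + phi (evenP (toA p hp)) = p.parts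
  rw [oddP_toA, evenP_toA, phi_of_psi (evenP_form hp), oddP_add_evenP]

noncomputable def equivAB : {p : n.Partition // PA p} ≃ {p : n.Partition // PB p} where
  toFun := fun x => ⟨toB x.1, toB_PB x.1⟩
  invFun := fun x => ⟨toA x.1 x.2, toA_PA x.1 x.2⟩
  left_inv := fun x => Subtype.ext (toA_toB x.2)
  right_inv := fun x => Subtype.ext (toB_toA x.2)


/-! ### largest part -/

lemma sup_mem {s : Multiset ℕ} (h : s ≠ 0) : s.sup ∈ s := by
  induction s using Multiset.induction_on with
  | empty => exact absurd rfl h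
  | cons a s ih =>
      rw [Multiset.sup_cons]
      rcases eq_or_ne s 0 with rfl | hs0
      · simp
      · rcases le_total s.sup a with hle | hle
        · rw [sup_eq_left.mpr hle]; exact Multiset.mem_cons_self a s
        · rw [sup_eq_right.mpr hle]
          exact Multiset.mem_cons_of_mem (ih hs0)

lemma parts_ne_zero (hn : 0 < n) (p : n.Partition) : p.parts ≠ 0 := by
  intro h
  have := p.parts_sum
  rw [h] at this
  simp at this
  omega

lemma maxodd_iff (hn : 0 < n) (p : n.Partition) :
    (∃ k ∈ p.parts, Odd k ∧ ∀ j ∈ p.parts, j ≤ k) ↔ Odd p.parts.sup := by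
  constructor
  · rintro ⟨k, hk, hodd, hmax⟩
    have : p.parts.sup = k :=
      le_antisymm (Multiset.sup_le.mpr hmax) (Multiset.le_sup hk)
    rw [this]; exact hodd
  · intro hodd
    exact ⟨p.parts.sup, sup_mem (parts_ne_zero hn p), hodd,
      fun j hj => Multiset.le_sup hj⟩

section Shift

variable (hn : 0 < n)

/-- Remove 1 from the (even) largest part. -/
noncomputable def shiftDown (p : n.Partition) (hp : PA p ∧ ¬ Odd p.parts.sup) :
    (n-1).Partition where
  parts := (p.parts.erase p.parts.sup) + {p.parts.sup - 1}
  parts_pos := by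
    intro i hi
    have hM : p.parts.sup ∈ p.parts := sup_mem (parts_ne_zero hn p)
    have hMpos : 0 < p.parts.sup := p.parts_pos hM
    have hMev : Even p.parts.sup := Nat.not_odd_iff_even.mp hp.2
    have hM2 : 2 ≤ p.parts.sup := by
      rcases hMev with ⟨r, hr⟩; omega
    rcases Multiset.mem_add.mp hi with h | h
    · exact p.parts_pos (Multiset.mem_of_mem_erase h)
    · rw [Multiset.mem_singleton] at h; omega
  parts_sum := by
    have hM : p.parts.sup ∈ p.parts := sup_mem (parts_ne_zero hn p)
    have hMpos : 0 < p.parts.sup := p.parts_pos hM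
    have hsum : p.parts.sup + (p.parts.erase p.parts.sup).sum = n := by
      rw [← Multiset.sum_cons, Multiset.cons_erase hM, p.parts_sum]
    rw [Multiset.sum_add, Multiset.sum_singleton]
    omega

lemma shiftDown_spec (p : n.Partition) (hp : PA p ∧ ¬ Odd p.parts.sup) :
    PA (shiftDown hn p hp) ∧
      (∃ k ∈ (shiftDown hn p hp).parts, Odd k ∧ ∀ j ∈ (shiftDown hn p hp).parts, j ≤ k) := by
  set M := p.parts.sup with hMdef
  have hM : M ∈ p.parts := sup_mem (parts_ne_zero hn p)
  have hMpos : 0 < M := p.parts_pos hM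
  have hMev : Even M := Nat.not_odd_iff_even.mp hp.2
  have hM2 : 2 ≤ M := by rcases hMev with ⟨r, hr⟩; omega
  have hModd : Odd (M - 1) := Nat.Even.sub_odd (by omega) hMev odd_one
  have hcountM : p.parts.count M = 1 := hp.1 M hM hMev
  have hMnotmem : M ∉ p.parts.erase M := by
    rw [← Multiset.count_eq_zero, Multiset.count_erase_self, hcountM]
  have hparts : (shiftDown hn p hp).parts = (p.parts.erase M) + {M - 1} := rfl
  have hub : ∀ j ∈ (shiftDown hn p hp).parts, j ≤ M - 1 := by
    intro j hj
    rw [hparts] at hj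
    rcases Multiset.mem_add.mp hj with h | h
    · have hjM : j ≤ M := Multiset.le_sup (Multiset.mem_of_mem_erase h)
      have : j ≠ M := fun he => hMnotmem (he ▸ h)
      omega
    · rw [Multiset.mem_singleton] at h; omega
  constructor
  · intro k hk hke
    have hkne : k ≠ M - 1 := by
      intro he
      rw [he] at hke
      rw [Nat.odd_iff] at hModd
      rcases hke with ⟨r, hr⟩
      omega
    rw [hparts] at hk ⊢
    rw [Multiset.count_add, Multiset.count_singleton, if_neg hkne, add_zero]
    rcases Multiset.mem_add.mp hk with h | h
    swap
    · rw [Multiset.mem_singleton] at h; exact absurd h hkne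
    have hkmem : k ∈ p.parts := Multiset.mem_of_mem_erase h
    have h1 : p.parts.count k = 1 := hp.1 k hkmem hke
    have hle : (p.parts.erase M).count k ≤ 1 := by
      calc (p.parts.erase M).count k ≤ p.parts.count k :=
            Multiset.count_le_of_le k (Multiset.erase_le M p.parts)
        _ = 1 := h1
    have hge : 1 ≤ (p.parts.erase M).count k := Multiset.one_le_count_iff_mem.mpr h
    omega
  · refine ⟨M - 1, ?_, hModd, hub⟩
    rw [hparts]
    exact Multiset.mem_add.mpr (Or.inr (Multiset.mem_singleton_self _))

/-- Add 1 to the (odd) largest part. -/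
noncomputable def shiftUp (q : (n-1).Partition)
    (hq : PA q ∧ ∃ k ∈ q.parts, Odd k ∧ ∀ j ∈ q.parts, j ≤ k) : n.Partition where
  parts := (q.parts.erase q.parts.sup) + {q.parts.sup + 1}
  parts_pos := by
    intro i hi
    rcases Multiset.mem_add.mp hi with h | h
    · exact q.parts_pos (Multiset.mem_of_mem_erase h)
    · rw [Multiset.mem_singleton] at h; omega
  parts_sum := by
    obtain ⟨k, hk, -, -⟩ := hq.2
    have hne : q.parts ≠ 0 := fun h0 => by rw [h0] at hk; simp at hk
    have hK : q.parts.sup ∈ q.parts := sup_mem hne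
    have hsum : q.parts.sup + (q.parts.erase q.parts.sup).sum = n - 1 := by
      rw [← Multiset.sum_cons, Multiset.cons_erase hK, q.parts_sum]
    rw [Multiset.sum_add, Multiset.sum_singleton]
    omega

lemma shiftUp_spec (q : (n-1).Partition)
    (hq : PA q ∧ ∃ k ∈ q.parts, Odd k ∧ ∀ j ∈ q.parts, j ≤ k) :
    PA (shiftUp hn q hq) ∧ ¬ Odd (shiftUp hn q hq).parts.sup := by
  obtain ⟨k, hk, hkodd, hkmax⟩ := hq.2
  set K := q.parts.sup with hKdef
  have hKeq : K = k := le_antisymm (Multiset.sup_le.mpr hkmax) (Multiset.le_sup hk)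
  have hK : K ∈ q.parts := by rw [hKeq]; exact hk
  have hKodd : Odd K := by rw [hKeq]; exact hkodd
  have hKmax : ∀ j ∈ q.parts, j ≤ K := by rw [hKeq]; exact hkmax
  have hparts : (shiftUp hn q hq).parts = (q.parts.erase K) + {K + 1} := rfl
  have hKp1notmem : K + 1 ∉ q.parts := fun h => by have := hKmax _ h; omega
  have hsup : (shiftUp hn q hq).parts.sup = K + 1 := by
    apply le_antisymm
    · rw [Multiset.sup_le]
      intro b hb
      rw [hparts] at hb
      rcases Multiset.mem_add.mp hb with h | h
      · have := hKmax b (Multiset.mem_of_mem_erase h); omega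
      · rw [Multiset.mem_singleton] at h; omega
    · apply Multiset.le_sup
      rw [hparts]
      exact Multiset.mem_add.mpr (Or.inr (Multiset.mem_singleton_self _))
  constructor
  · intro x hx hxe
    rw [hparts] at hx ⊢
    rw [Multiset.count_add, Multiset.count_singleton]
    by_cases hxK : x = K + 1
    · rw [if_pos hxK]
      have : x ∉ q.parts.erase K := fun h =>
        hKp1notmem (hxK ▸ Multiset.mem_of_mem_erase h)
      rw [Multiset.count_eq_zero_of_notMem this]
    · rw [if_neg hxK, add_zero]
      rcases Multiset.mem_add.mp hx with h | h
      swap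
      · rw [Multiset.mem_singleton] at h; exact absurd h hxK
      have hxmem : x ∈ q.parts := Multiset.mem_of_mem_erase h
      have h1 : q.parts.count x = 1 := hq.1 x hxmem hxe
      have hle : (q.parts.erase K).count x ≤ 1 := by
        calc (q.parts.erase K).count x ≤ q.parts.count x :=
              Multiset.count_le_of_le x (Multiset.erase_le K q.parts)
          _ = 1 := h1
      have hge : 1 ≤ (q.parts.erase K).count x := Multiset.one_le_count_iff_mem.mpr h
      omega
  · rw [hsup, Nat.not_odd_iff_even]
    rcases hKodd with ⟨r, hr⟩
    exact ⟨r + 1, by omega⟩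

lemma shiftDown_shiftUp (p : n.Partition) (hp : PA p ∧ ¬ Odd p.parts.sup) :
    shiftUp hn (shiftDown hn p hp) (shiftDown_spec hn p hp) = p := by
  set M := p.parts.sup with hMdef
  have hM : M ∈ p.parts := sup_mem (parts_ne_zero hn p)
  have hMpos : 0 < M := p.parts_pos hM
  have hMev : Even M := Nat.not_odd_iff_even.mp hp.2
  have hM2 : 2 ≤ M := by rcases hMev with ⟨r, hr⟩; omega
  obtain ⟨-, k, hkmem, hkodd, hkmax⟩ := shiftDown_spec hn p hp
  have hdparts : (shiftDown hn p hp).parts = (p.parts.erase M) + {M - 1} := rfl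
  have hMm1mem : M - 1 ∈ (shiftDown hn p hp).parts := by
    rw [hdparts]; exact Multiset.mem_add.mpr (Or.inr (Multiset.mem_singleton_self _))
  -- the sup of the shifted partition is M - 1
  have hsup : (shiftDown hn p hp).parts.sup = M - 1 := by
    apply le_antisymm
    · rw [Multiset.sup_le]
      intro b hb
      rw [hdparts] at hb
      have hcountM : p.parts.count M = 1 := hp.1 M hM hMev
      have hMnotmem : M ∉ p.parts.erase M := by
        rw [← Multiset.count_eq_zero, Multiset.count_erase_self, hcountM]
      rcases Multiset.mem_add.mp hb with h | h
      · have hbM : b ≤ M := Multiset.le_sup (Multiset.mem_of_mem_erase h)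
        have : b ≠ M := fun he => hMnotmem (he ▸ h)
        omega
      · rw [Multiset.mem_singleton] at h; omega
    · exact Multiset.le_sup hMm1mem
  ext1
  show ((shiftDown hn p hp).parts.erase (shiftDown hn p hp).parts.sup)
      + {(shiftDown hn p hp).parts.sup + 1} = p.parts
  rw [hsup, hdparts]
  have h1 : ((p.parts.erase M + {M - 1}).erase (M - 1)) = p.parts.erase M := by
    rw [add_comm, Multiset.singleton_add, Multiset.erase_cons_head]
  rw [h1, show M - 1 + 1 = M by omega, add_comm, Multiset.singleton_add,
    Multiset.cons_erase hM]

lemma shiftUp_shiftDown (q : (n-1).Partition)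
    (hq : PA q ∧ ∃ k ∈ q.parts, Odd k ∧ ∀ j ∈ q.parts, j ≤ k) :
    shiftDown hn (shiftUp hn q hq) (shiftUp_spec hn q hq) = q := by
  obtain ⟨k, hk, hkodd, hkmax⟩ := hq.2
  set K := q.parts.sup with hKdef
  have hKeq : K = k := le_antisymm (Multiset.sup_le.mpr hkmax) (Multiset.le_sup hk)
  have hK : K ∈ q.parts := by rw [hKeq]; exact hk
  have hKmax : ∀ j ∈ q.parts, j ≤ K := by rw [hKeq]; exact hkmax
  have huparts : (shiftUp hn q hq).parts = (q.parts.erase K) + {K + 1} := rfl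
  have hsup : (shiftUp hn q hq).parts.sup = K + 1 := by
    apply le_antisymm
    · rw [Multiset.sup_le]
      intro b hb
      rw [huparts] at hb
      rcases Multiset.mem_add.mp hb with h | h
      · have := hKmax b (Multiset.mem_of_mem_erase h); omega
      · rw [Multiset.mem_singleton] at h; omega
    · apply Multiset.le_sup
      rw [huparts]
      exact Multiset.mem_add.mpr (Or.inr (Multiset.mem_singleton_self _))
  ext1
  show ((shiftUp hn q hq).parts.erase (shiftUp hn q hq).parts.sup)
      + {(shiftUp hn q hq).parts.sup - 1} = q.parts
  rw [hsup, huparts]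
  have h1 : ((q.parts.erase K + {K + 1}).erase (K + 1)) = q.parts.erase K := by
    rw [add_comm, Multiset.singleton_add, Multiset.erase_cons_head]
  rw [h1, show K + 1 - 1 = K by omega, add_comm, Multiset.singleton_add,
    Multiset.cons_erase hK]

noncomputable def equivShift :
    {p : n.Partition // PA p ∧ ¬ Odd p.parts.sup} ≃
      {q : (n-1).Partition // PA q ∧ ∃ k ∈ q.parts, Odd k ∧ ∀ j ∈ q.parts, j ≤ k} where
  toFun := fun x => ⟨shiftDown hn x.1 x.2, shiftDown_spec hn x.1 x.2⟩
  invFun := fun x => ⟨shiftUp hn x.1 x.2, shiftUp_spec hn x.1 x.2⟩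
  left_inv := fun x => Subtype.ext (shiftDown_shiftUp hn x.1 x.2)
  right_inv := fun x => Subtype.ext (shiftUp_shiftDown hn x.1 x.2)

end Shift


lemma card_split {α : Type*} [Finite α] (P Q : α → Prop) :
    Nat.card {x // P x} = Nat.card {x // P x ∧ Q x} + Nat.card {x // P x ∧ ¬ Q x} := by
  classical
  rw [← Nat.card_sum]
  exact (Nat.card_congr (((Equiv.subtypeSubtypeEquivSubtypeInter P Q).symm.sumCongr
    (Equiv.subtypeSubtypeEquivSubtypeInter P (fun x => ¬ Q x)).symm).trans
    (Equiv.sumCompl fun x : {a // P a} => Q x.1))).symm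

end StmtAux

theorem stmt_6 (n : ℕ) (hn : 0 < n) :
    DE1 n + DE1 (n - 1) =
      Nat.card {p : n.Partition // ∀ k ∈ p.parts, ¬ (4 ∣ k)} := by
  classical
  have h1 : Nat.card {p : n.Partition // ∀ k ∈ p.parts, ¬ (4 ∣ k)}
      = Nat.card {p : n.Partition // StmtAux.PA p} :=
    (Nat.card_congr StmtAux.equivAB).symm
  rw [h1, StmtAux.card_split (StmtAux.PA (n := n)) (fun p => Odd p.parts.sup)]
  congr 1
  · exact Nat.card_congr (Equiv.subtypeEquivRight fun p =>
      and_congr_right fun _ => StmtAux.maxodd_iff hn p)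
  · exact (Nat.card_congr (StmtAux.equivShift hn)).symm
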